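/- Let B, n, q ≥ 1, let X, Y ∈ Matrix (Fin n) (Fin B) ℝ, D ∈ Matrix (Fin n) (Fin q) ℝ, and E ∈ Matrix (Fin q) (Fin n) ℝ be fixed, and let α : Fin q → ℝ satisfy the nondegeneracy condition |(E·Y)_{k,b}| ≠ Real.exp(α k) for all k, b. Define Z_{k,b} = Real.sign((E·Y)_{k,b}) · max(|(E·Y)_{k,b}| − exp(α k), 0) and the loss L(a) = (1/B) ∑_{r,b} ( X_{r,b} − ∑_k D_{r,k} · Real.sign((E·Y)_{k,b}) · max(|(E·Y)_{k,b}| − exp(a k), 0) )² for a : Fin q → ℝ. Then L is differentiable at α with Fréchet derivative h ↦ ∑_{k < q} g_k · h_k, where g_k = (2/B) ∑_{b < B} ( Dᵀ·(X − D·Z) )_{k,b} · exp(α k) · Real.sign(Z_{k,b}). That is, ∂L/∂α = (2/B) { Dᵀ(X − DZ) ⊙ exp(α 1ᵀ) ⊙ sign(Z) } 1. -/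

import Mathlib

open Matrix

lemma sign_case (u c : ℝ) (hu : |u| ≠ Real.exp c) :
    HasDerivAt (fun t : ℝ => Real.sign u * max (|u| - Real.exp t) 0)
      (-Real.exp c * Real.sign (Real.sign u * max (|u| - Real.exp c) 0)) c := by
  rcases lt_or_gt_of_ne hu with hlt | hgt
  · have hev : (fun t : ℝ => Real.sign u * max (|u| - Real.exp t) 0) =ᶠ[nhds c]
        fun _ => Real.sign u * 0 := by
      have hopen : IsOpen {t : ℝ | |u| < Real.exp t} :=
        isOpen_lt continuous_const Real.continuous_exp
      filter_upwards [hopen.mem_nhds hlt] with t ht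
      have ht' : |u| < Real.exp t := ht
      rw [max_eq_right (by linarith)]
    have h0 : HasDerivAt (fun _ : ℝ => Real.sign u * 0) 0 c := hasDerivAt_const _ _
    have := h0.congr_of_eventuallyEq hev
    refine this.congr_deriv ?_
    rw [max_eq_right (by linarith), mul_zero, Real.sign_zero, mul_zero]
  · have hev : (fun t : ℝ => Real.sign u * max (|u| - Real.exp t) 0) =ᶠ[nhds c]
        fun t => Real.sign u * (|u| - Real.exp t) := by
      have hopen : IsOpen {t : ℝ | Real.exp t < |u|} :=
        isOpen_lt Real.continuous_exp continuous_const
      filter_upwards [hopen.mem_nhds hgt] with t ht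
      have ht' : Real.exp t < |u| := ht
      rw [max_eq_left (by linarith)]
    have h1 : HasDerivAt (fun t : ℝ => Real.sign u * (|u| - Real.exp t))
        (Real.sign u * (-Real.exp c)) c :=
      (((Real.hasDerivAt_exp c).const_sub |u|)).const_mul (Real.sign u)
    have := h1.congr_of_eventuallyEq hev
    refine this.congr_deriv ?_
    have hm : (0:ℝ) < |u| - Real.exp c := by linarith
    rw [max_eq_left hm.le]
    have hu0 : u ≠ 0 := by
      intro h; rw [h, abs_zero] at hgt; exact absurd hgt (not_lt.2 (Real.exp_pos c).le)
    rcases hu0.lt_or_gt with hneg | hpos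
    · rw [Real.sign_of_neg hneg]
      rw [show (-1 : ℝ) * (|u| - Real.exp c) = -(|u| - Real.exp c) by ring,
        Real.sign_neg, Real.sign_of_pos hm]
      ring
    · rw [Real.sign_of_pos hpos, one_mul, one_mul, Real.sign_of_pos hm]
      ring

/-- Derivative of the mini-batch training loss with respect to the thresholding
exponents `α`: under the nondegeneracy condition `|EY| ≠ exp(α)`, the loss is
differentiable at `α` with gradient `(2/B){Dᵀ(X − DZ) ⊙ exp(α1ᵀ) ⊙ sign(Z)}1`. -/
theorem hasFDerivAt_loss_wrt_alpha (B n q : ℕ) (hB : 1 ≤ B) (hn : 1 ≤ n) (hq : 1 ≤ q)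
    (X Y : Matrix (Fin n) (Fin B) ℝ)
    (D : Matrix (Fin n) (Fin q) ℝ) (E : Matrix (Fin q) (Fin n) ℝ)
    (α : Fin q → ℝ)
    (hnd : ∀ (k : Fin q) (b : Fin B), |(E * Y) k b| ≠ Real.exp (α k))
    (Z : Matrix (Fin q) (Fin B) ℝ)
    (hZ : ∀ (k : Fin q) (b : Fin B),
      Z k b = Real.sign ((E * Y) k b) * max (|(E * Y) k b| - Real.exp (α k)) 0) :
    ∃ f : (Fin q → ℝ) →L[ℝ] ℝ,
      (∀ h : Fin q → ℝ,
        f h = ∑ k : Fin q,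
          ((2 / (B : ℝ)) * ∑ b : Fin B,
            (Dᵀ * (X - D * Z)) k b * Real.exp (α k) * Real.sign (Z k b)) * h k) ∧
      HasFDerivAt
        (fun a : Fin q → ℝ =>
          (1 / (B : ℝ)) * ∑ r : Fin n, ∑ b : Fin B,
            (X r b - ∑ k : Fin q,
              D r k * (Real.sign ((E * Y) k b)
                * max (|(E * Y) k b| - Real.exp (a k)) 0)) ^ 2)
        f α := by
  have key : ∀ (k : Fin q) (b : Fin B),
      HasFDerivAt (fun a : Fin q → ℝ =>
        Real.sign ((E * Y) k b) * max (|(E * Y) k b| - Real.exp (a k)) 0)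
        ((-Real.exp (α k) * Real.sign (Z k b)) •
          (ContinuousLinearMap.proj k : (Fin q → ℝ) →L[ℝ] ℝ)) α := by
    intro k b
    have h1 := sign_case ((E * Y) k b) (α k) (hnd k b)
    rw [← hZ k b] at h1
    exact h1.comp_hasFDerivAt (f := fun a : Fin q → ℝ => a k) α
      (ContinuousLinearMap.proj k : (Fin q → ℝ) →L[ℝ] ℝ).hasFDerivAt
  have inner : ∀ (r : Fin n) (b : Fin B),
      HasFDerivAt (fun a : Fin q → ℝ => X r b - ∑ k : Fin q,
          D r k * (Real.sign ((E * Y) k b) * max (|(E * Y) k b| - Real.exp (a k)) 0))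
        (-(∑ k : Fin q, D r k • ((-Real.exp (α k) * Real.sign (Z k b)) •
          (ContinuousLinearMap.proj k : (Fin q → ℝ) →L[ℝ] ℝ)))) α := by
    intro r b
    exact (HasFDerivAt.fun_sum fun k _ => (key k b).const_mul (D r k)).const_sub (X r b)
  have sq : ∀ (r : Fin n) (b : Fin B),
      HasFDerivAt (fun a : Fin q → ℝ => (X r b - ∑ k : Fin q,
          D r k * (Real.sign ((E * Y) k b) * max (|(E * Y) k b| - Real.exp (a k)) 0)) ^ 2)
        ((2 * (X r b - ∑ k : Fin q, D r k * Z k b)) •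
          (∑ k : Fin q, D r k • ((Real.exp (α k) * Real.sign (Z k b)) •
            (ContinuousLinearMap.proj k : (Fin q → ℝ) →L[ℝ] ℝ)))) α := by
    intro r b
    have h2 := (inner r b).mul (inner r b)
    simp only [← pow_two] at h2
    simp only [← hZ] at h2
    refine h2.congr_fderiv ?_
    ext x
    simp only [ContinuousLinearMap.smul_apply, ContinuousLinearMap.add_apply,
      ContinuousLinearMap.neg_apply, ContinuousLinearMap.sum_apply,
      ContinuousLinearMap.proj_apply, smul_eq_mul, Finset.mul_sum, mul_neg, neg_mul,
      neg_neg]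
    simp only [Finset.sum_neg_distrib, neg_neg]
    rw [← Finset.sum_add_distrib]
    refine Finset.sum_congr rfl fun k _ => by ring
  have H := (HasFDerivAt.fun_sum (fun r (_ : r ∈ Finset.univ) =>
      HasFDerivAt.fun_sum (fun b (_ : b ∈ Finset.univ) => sq r b))).const_mul (1 / (B : ℝ))
  refine ⟨_, fun h => ?_, H⟩
  simp only [ContinuousLinearMap.coe_smul', Pi.smul_apply, ContinuousLinearMap.sum_apply,
    ContinuousLinearMap.smul_apply, ContinuousLinearMap.neg_apply,
    ContinuousLinearMap.proj_apply, smul_eq_mul, Matrix.mul_apply,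
    Matrix.transpose_apply, Matrix.sub_apply]
  simp only [Finset.mul_sum, Finset.sum_mul]
  rw [Finset.sum_comm]
  refine Eq.trans (Finset.sum_congr rfl fun b _ => Finset.sum_comm) ?_
  rw [Finset.sum_comm]
  exact Finset.sum_congr rfl fun k _ => Finset.sum_congr rfl fun b _ =>
    Finset.sum_congr rfl fun r _ => by ring
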